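/- Let F be a free group with free generators x_1, ..., x_n and let p < n. Suppose y_1, ..., y_p are elements of F such that y_i = u_i · x_i · v_i where u_i and v_i are words involving only the generators x_{p+1}, ..., x_n. Then the set {y_1, ..., y_p, x_{p+1}, ..., x_n} is a set of free generators of F. -/

import Mathlib

lemma fix_closure {n p : ℕ} (f : FreeGroup (Fin n) →* FreeGroup (Fin n))
    (hf : ∀ j : Fin n, p ≤ (j : ℕ) → f (FreeGroup.of j) = FreeGroup.of j) :
    ∀ g ∈ Subgroup.closure (FreeGroup.of '' {j : Fin n | p ≤ (j : ℕ)}), f g = g := by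
  intro g hg
  induction hg using Subgroup.closure_induction with
  | mem x hx =>
      obtain ⟨j, hj, rfl⟩ := hx
      exact hf j hj
  | one => exact map_one f
  | mul a b _ _ ha hb => rw [map_mul, ha, hb]
  | inv a _ ha => rw [map_inv, ha]

/-- If `y i = u * x_i * v` for `i < p` with `u, v` in the subgroup generated by the
generators `x_j`, `p ≤ j`, and `y i = x_i` for `p ≤ i`, then the `y i` form a set of
free generators of the free group on `n` generators. -/
theorem stmt0 (n p : ℕ) (hp : p < n) (y : Fin n → FreeGroup (Fin n))
    (h1 : ∀ i : Fin n, (i : ℕ) < p →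
      ∃ u v : FreeGroup (Fin n),
        u ∈ Subgroup.closure (FreeGroup.of '' {j : Fin n | p ≤ (j : ℕ)}) ∧
        v ∈ Subgroup.closure (FreeGroup.of '' {j : Fin n | p ≤ (j : ℕ)}) ∧
        y i = u * FreeGroup.of i * v)
    (h2 : ∀ i : Fin n, p ≤ (i : ℕ) → y i = FreeGroup.of i) :
    Function.Bijective (FreeGroup.lift y) := by
  classical
  choose u v hu hv hy using h1
  set z : Fin n → FreeGroup (Fin n) := fun i =>
    if h : (i : ℕ) < p then (u i h)⁻¹ * FreeGroup.of i * (v i h)⁻¹ else FreeGroup.of i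
    with hz
  have hyfix := fix_closure (p := p) (FreeGroup.lift y) (fun j hj => by
    simp [h2 j hj])
  have hzfix := fix_closure (p := p) (FreeGroup.lift z) (fun j hj => by
    simp [hz, Nat.not_lt.mpr hj])
  have comp1 : ∀ i, FreeGroup.lift z (y i) = FreeGroup.of i := by
    intro i
    by_cases h : (i : ℕ) < p
    · rw [hy i h]
      rw [map_mul, map_mul, hzfix _ (hu i h), hzfix _ (hv i h)]
      simp only [map_mul, FreeGroup.lift_apply_of, hzfix _ (hu i h), hzfix _ (hv i h),
        hz]
      rw [dif_pos h]
      group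
    · rw [h2 i (Nat.not_lt.mp h)]
      simp [hz, h]
  have comp2 : ∀ i, FreeGroup.lift y (z i) = FreeGroup.of i := by
    intro i
    by_cases h : (i : ℕ) < p
    · simp only [hz, dif_pos h, map_mul, map_inv, FreeGroup.lift_apply_of,
        hyfix _ (hu i h), hyfix _ (hv i h)]
      rw [hy i h]
      group
    · simp [hz, h, h2 i (Nat.not_lt.mp h)]
  have hc1 : (FreeGroup.lift z).comp (FreeGroup.lift y) = MonoidHom.id _ := by
    apply FreeGroup.ext_hom
    intro i
    simp [comp1 i]
  have hc2 : (FreeGroup.lift y).comp (FreeGroup.lift z) = MonoidHom.id _ := by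
    apply FreeGroup.ext_hom
    intro i
    simp [comp2 i]
  exact Function.bijective_iff_has_inverse.mpr ⟨FreeGroup.lift z,
    fun a => DFunLike.congr_fun hc1 a,
    fun a => DFunLike.congr_fun hc2 a⟩
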